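/- Let {X_ℓ, f_ℓ} be an inverse sequence of compact metric spaces with surjective continuous bonding functions. The following are equivalent: (1) the inverse limit varprojlim{X_ℓ, f_ℓ} does not have the fixed point property; (2) there is a sequence (H_ℓ) of upper semicontinuous set-valued functions H_ℓ : X_{ℓ+1} ⊸ X_ℓ such that (a) f_k(H_{k+1}(x)) ⊆ H_k(f_{k+1}(x)) for each positive integer k and each x ∈ X_{k+2}, (b) for each positive integer j, lim_{k→∞, k≥j} diam(f_{j,k}(H_k(p_{k+1}(x)))) = 0 for every x ∈ varprojlim{X_ℓ, f_ℓ} (where p_{k+1}(x) denotes the (k+1)-st coordinate of x), and (c) there is a positive integer k such that f_k(x) ∉ H_k(x) for each point x ∈ X_{k+1}. -/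

import Mathlib

open Metric Filter Set Function

/-- The inverse limit of an inverse sequence `{X n, f n}` of spaces with
single-valued bonding maps `f n : X (n+1) → X n`. -/
def invLim (X : ℕ → Type*) (f : ∀ n, X (n + 1) → X n) : Set (∀ n, X n) :=
  {x | ∀ n, x n = f n (x (n + 1))}

/-- The composite bonding map `f_{n,m} : X m → X n` for `n ≤ m`. -/
def bondMap {X : ℕ → Type*} (f : ∀ n, X (n + 1) → X n) {n m : ℕ} (h : n ≤ m) :
    X m → X n :=
  Nat.leRecOn (C := fun k => X k → X n) h (fun {k} g => g ∘ f k) id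

/-- A set-valued function is upper semicontinuous (with nonempty closed values):
all of its values are nonempty closed sets and its graph is closed. -/
def IsUSC {A B : Type*} [TopologicalSpace A] [TopologicalSpace B] (F : A → Set B) : Prop :=
  (∀ a, (F a).Nonempty) ∧ (∀ a, IsClosed (F a)) ∧ IsClosed {p : A × B | p.2 ∈ F p.1}

/-- The `T_{n,m}` transformation of a map between inverse limits:
`T_{n,m}(g)(x) = q_n (g (p_m ⁻¹ x))`. -/
def Ttrans {X Y : ℕ → Type*} {f : ∀ n, X (n + 1) → X n} {gs : ∀ n, Y (n + 1) → Y n}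
    (g : ↥(invLim X f) → ↥(invLim Y gs)) (n m : ℕ) (x : X m) : Set (Y n) :=
  {y | ∃ z : ↥(invLim X f), z.1 m = x ∧ (g z).1 n = y}

/-- A space has the fixed point property if every continuous self-map has a fixed point. -/
def HasFPP (Z : Type*) [TopologicalSpace Z] : Prop :=
  ∀ g : Z → Z, Continuous g → ∃ p, g p = p

set_option linter.unusedSectionVars false

section BondMap

variable {X : ℕ → Type*} (f : ∀ n, X (n + 1) → X n)

theorem bondMap_self {n : ℕ} (h : n ≤ n) (x : X n) : bondMap f h x = x :=
  congrFun (Nat.leRecOn_self (C := fun k => X k → X n) (next := fun {k} g => g ∘ f k) id) x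

theorem bondMap_succ {n m : ℕ} (h1 : n ≤ m) (h2 : n ≤ m + 1) (x : X (m + 1)) :
    bondMap f h2 x = bondMap f h1 (f m x) :=
  congrFun (Nat.leRecOn_succ (C := fun k => X k → X n) (next := fun {k} g => g ∘ f k) h1 id) x

theorem bondMap_bot {n : ℕ} : ∀ {m : ℕ} (h : n + 1 ≤ m) (x : X m),
    bondMap f (Nat.le_of_succ_le h) x = f n (bondMap f h x) := by
  intro m
  induction m with
  | zero => intro h; omega
  | succ m ih =>
    intro h x
    by_cases hm : n + 1 ≤ m
    · rw [bondMap_succ f (Nat.le_of_succ_le hm) (Nat.le_of_succ_le h),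
        bondMap_succ f hm h, ih hm]
    · have : m = n := by omega
      subst this
      rw [bondMap_succ f (le_refl m) (Nat.le_of_succ_le h), bondMap_self, bondMap_self]

theorem bondMap_thread {f : ∀ n, X (n + 1) → X n} {z : ∀ n, X n} (hz : z ∈ invLim X f) :
    ∀ {m n : ℕ} (h : n ≤ m), bondMap f h (z m) = z n := by
  intro m
  induction m with
  | zero =>
    intro n h
    have : n = 0 := Nat.le_zero.mp h
    subst this; exact bondMap_self f h _
  | succ m ih =>
    intro n h
    by_cases hm : n ≤ m
    · rw [bondMap_succ f hm h, ← hz m, ih hm]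
    · have : n = m + 1 := by omega
      subst this; exact bondMap_self f h _

theorem bondMap_continuous [∀ n, TopologicalSpace (X n)] {f : ∀ n, X (n + 1) → X n}
    (hfc : ∀ n, Continuous (f n)) : ∀ {m n : ℕ} (h : n ≤ m), Continuous (bondMap f h) := by
  intro m
  induction m with
  | zero =>
    intro n h
    have : n = 0 := Nat.le_zero.mp h
    subst this
    have : bondMap f h = id := funext fun x => bondMap_self f h x
    rw [this]; exact continuous_id
  | succ m ih =>
    intro n h
    by_cases hm : n ≤ m
    · have : bondMap f h = bondMap f hm ∘ f m := funext fun x => bondMap_succ f hm h x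
      rw [this]; exact (ih hm).comp (hfc m)
    · have : n = m + 1 := by omega
      subst this
      have : bondMap f h = id := funext fun x => bondMap_self f h x
      rw [this]; exact continuous_id

end BondMap

section InvLim

variable {X : ℕ → Type*}

theorem isClosed_invLim [∀ n, TopologicalSpace (X n)] [∀ n, T2Space (X n)]
    {f : ∀ n, X (n + 1) → X n} (hfc : ∀ n, Continuous (f n)) : IsClosed (invLim X f) := by
  have : invLim X f = ⋂ n, {x : ∀ n, X n | x n = f n (x (n + 1))} := by
    ext x; simp only [invLim, Set.mem_setOf_eq, Set.mem_iInter]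
  rw [this]
  exact isClosed_iInter fun n =>
    isClosed_eq (continuous_apply n) ((hfc n).comp (continuous_apply (n + 1)))

theorem nonempty_of_elem {f : ∀ n, X (n + 1) → X n} (hfs : ∀ n, Surjective (f n))
    {m : ℕ} (x : X m) : ∀ n, Nonempty (X n) := by
  intro n
  induction n with
  | zero => exact ⟨bondMap f (Nat.zero_le m) x⟩
  | succ n ih =>
    obtain ⟨y⟩ := ih
    obtain ⟨a, _⟩ := hfs n y
    exact ⟨a⟩

theorem exists_thread [∀ n, MetricSpace (X n)] [∀ n, CompactSpace (X n)]
    {f : ∀ n, X (n + 1) → X n} (hfc : ∀ n, Continuous (f n)) (hfs : ∀ n, Surjective (f n))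
    (m : ℕ) (x : X m) : ∃ z : ∀ n, X n, z ∈ invLim X f ∧ z m = x := by
  haveI : ∀ n, Nonempty (X n) := nonempty_of_elem hfs x
  have base : ∃ w : ∀ n, X n, w m = x ∧ ∀ j < m, w j = f j (w (j + 1)) := by
    refine ⟨fun n => if h : n ≤ m then bondMap f h x else Classical.arbitrary _, by
      simp only [dif_pos (le_refl m)]; exact bondMap_self f (le_refl m) x, ?_⟩
    intro j hj
    have hj1 : j + 1 ≤ m := hj
    have hjm : j ≤ m := Nat.le_of_succ_le hj1
    simp only [dif_pos hj1, dif_pos hjm]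
    exact bondMap_bot f hj1 x
  have step : ∀ i, m ≤ i → (∃ w : ∀ n, X n, w m = x ∧ ∀ j < i, w j = f j (w (j + 1))) →
      ∃ w : ∀ n, X n, w m = x ∧ ∀ j < i + 1, w j = f j (w (j + 1)) := by
    rintro i hi ⟨w, hwm, hw⟩
    obtain ⟨a, ha⟩ := hfs i (w i)
    refine ⟨Function.update w (i + 1) a, ?_, ?_⟩
    · rw [Function.update_of_ne (by omega)]; exact hwm
    · intro j hj
      rcases Nat.lt_succ_iff_lt_or_eq.mp hj with hj' | rfl
      · rw [Function.update_of_ne (by omega), Function.update_of_ne (by omega)]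
        exact hw j hj'
      · rw [Function.update_of_ne (by omega), Function.update_self]
        exact ha.symm
  have keyup : ∀ i, ∃ w : ∀ n, X n, w m = x ∧ ∀ j < m + i, w j = f j (w (j + 1)) := by
    intro i
    induction i with
    | zero => exact base
    | succ i ih => exact step (m + i) (Nat.le_add_right m i) ih
  have key : ∀ i, ∃ w : ∀ n, X n, w m = x ∧ ∀ j < i, w j = f j (w (j + 1)) := by
    intro i
    obtain ⟨w, h1, h2⟩ := keyup i
    exact ⟨w, h1, fun j hj => h2 j (by omega)⟩
  set C : ℕ → Set (∀ n, X n) :=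
    fun i => {w | w m = x} ∩ ⋂ (j : ℕ) (_ : j < i), {w | w j = f j (w (j + 1))} with hC
  have hCcl : ∀ i, IsClosed (C i) := by
    intro i
    refine (isClosed_eq (continuous_apply m) continuous_const).inter ?_
    exact isClosed_iInter fun j => isClosed_iInter fun _ =>
      isClosed_eq (continuous_apply j) ((hfc j).comp (continuous_apply (j + 1)))
  have hCne : ∀ i, (C i).Nonempty := by
    intro i
    obtain ⟨w, h1, h2⟩ := key i
    exact ⟨w, h1, by simpa only [Set.mem_iInter, Set.mem_setOf_eq] using fun j hj => h2 j hj⟩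
  have hCdec : ∀ i, C (i + 1) ⊆ C i := by
    rintro i w ⟨h1, h2⟩
    refine ⟨h1, ?_⟩
    simp only [Set.mem_iInter] at h2 ⊢
    exact fun j hj => h2 j (by omega)
  obtain ⟨w, hw⟩ := IsCompact.nonempty_iInter_of_sequence_nonempty_isCompact_isClosed
    C hCdec hCne ((hCcl 0).isCompact) hCcl
  simp only [Set.mem_iInter] at hw
  refine ⟨w, fun n => ?_, (hw 0).1⟩
  have := (hw (n + 1)).2
  simp only [Set.mem_iInter] at this
  exact this n (by omega)

end InvLim

theorem continuous_of_isClosed_graph {A B : Type*} [TopologicalSpace A] [TopologicalSpace B]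
    [CompactSpace B] {g : A → B} (h : IsClosed {p : A × B | p.2 = g p.1}) : Continuous g := by
  rw [continuous_iff_isClosed]
  intro C hC
  have heq : g ⁻¹' C = Prod.fst '' ({p : A × B | p.2 = g p.1} ∩ Set.univ ×ˢ C) := by
    ext a
    constructor
    · intro ha
      exact ⟨(a, g a), ⟨rfl, ⟨trivial, ha⟩⟩, rfl⟩
    · rintro ⟨⟨a', b⟩, ⟨hb, -, hbC⟩, rfl⟩
      simp only [Set.mem_setOf_eq] at hb
      simpa only [Set.mem_preimage, ← hb]
  rw [heq]
  exact isClosedMap_fst_of_compactSpace _ (h.inter (isClosed_univ.prod hC))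

set_option linter.unusedSectionVars false in
/-- The decreasing family of approximating sets. -/
def Sset {X : ℕ → Type*} (f : ∀ n, X (n + 1) → X n) (H : ∀ k, X (k + 1) → Set (X k))
    (j k : ℕ) (z : ↥(invLim X f)) : Set (X j) :=
  if h : j ≤ k then bondMap f h '' H k (z.1 (k + 1)) else Set.univ

section Sset

variable {X : ℕ → Type*} [∀ n, MetricSpace (X n)] [∀ n, CompactSpace (X n)]
  {f : ∀ n, X (n + 1) → X n} {H : ∀ k, X (k + 1) → Set (X k)}

theorem Sset_of_le {j k : ℕ} (h : j ≤ k) (z : ↥(invLim X f)) :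
    Sset f H j k z = bondMap f h '' H k (z.1 (k + 1)) := dif_pos h

theorem Sset_isCompact (hfc : ∀ n, Continuous (f n)) (hH : ∀ k, IsUSC (H k))
    (j k : ℕ) (z : ↥(invLim X f)) : IsCompact (Sset f H j k z) := by
  unfold Sset
  split
  · exact (((hH k).2.1 _).isCompact).image (bondMap_continuous hfc _)
  · exact isCompact_univ

theorem Sset_nonempty (hH : ∀ k, IsUSC (H k)) (j k : ℕ) (z : ↥(invLim X f)) :
    (Sset f H j k z).Nonempty := by
  unfold Sset
  split
  · exact ((hH k).1 _).image _
  · haveI : Nonempty (X j) := ⟨z.1 j⟩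
    exact Set.univ_nonempty

theorem Sset_antitone
    (hA : ∀ k : ℕ, ∀ x : X (k + 2), f k '' H (k + 1) x ⊆ H k (f (k + 1) x))
    (j : ℕ) (z : ↥(invLim X f)) : Antitone fun k => Sset f H j k z := by
  apply antitone_nat_of_succ_le
  intro k
  by_cases h : j ≤ k
  · have h' : j ≤ k + 1 := h.trans k.le_succ
    rw [Sset_of_le h' z, Sset_of_le h z]
    have hcomp : bondMap f h' = bondMap f h ∘ f k := funext fun x => bondMap_succ f h h' x
    rw [hcomp, Set.image_comp]
    have hz : z.1 (k + 1) = f (k + 1) (z.1 (k + 2)) := z.2 (k + 1)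
    have := hA k (z.1 (k + 2))
    rw [← hz] at this
    exact Set.image_mono this
  · intro a _
    show a ∈ Sset f H j k z
    unfold Sset
    rw [dif_neg h]
    trivial

theorem Tset_nonempty (hfc : ∀ n, Continuous (f n)) (hH : ∀ k, IsUSC (H k))
    (hA : ∀ k : ℕ, ∀ x : X (k + 2), f k '' H (k + 1) x ⊆ H k (f (k + 1) x))
    (j : ℕ) (z : ↥(invLim X f)) : (⋂ k, Sset f H j k z).Nonempty :=
  IsCompact.nonempty_iInter_of_sequence_nonempty_isCompact_isClosed _
    (fun k => Sset_antitone hA j z k.le_succ)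
    (fun k => Sset_nonempty hH j k z)
    (Sset_isCompact hfc hH j 0 z)
    (fun k => (Sset_isCompact hfc hH j k z).isClosed)

theorem Tset_subsingleton (hfc : ∀ n, Continuous (f n)) (hH : ∀ k, IsUSC (H k))
    (hB : ∀ j : ℕ, ∀ z : ↥(invLim X f),
      Tendsto (fun k => diam (if hj : j ≤ k then bondMap f hj '' H k (z.1 (k + 1))
        else (∅ : Set (X j)))) atTop (nhds (0 : ℝ)))
    (j : ℕ) (z : ↥(invLim X f)) {a b : X j}
    (ha : a ∈ ⋂ k, Sset f H j k z) (hb : b ∈ ⋂ k, Sset f H j k z) : a = b := by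
  have hd : dist a b ≤ 0 := by
    refine ge_of_tendsto (hB j z) ?_
    filter_upwards [eventually_ge_atTop j] with k hk
    have h1 : a ∈ Sset f H j k z := Set.mem_iInter.mp ha k
    have h2 : b ∈ Sset f H j k z := Set.mem_iInter.mp hb k
    have hbd := Metric.dist_le_diam_of_mem (Sset_isCompact hfc hH j k z).isBounded h1 h2
    rw [Sset_of_le hk z] at hbd
    rw [dif_pos hk]
    exact hbd
  have := dist_nonneg (x := a) (y := b)
  have : dist a b = 0 := le_antisymm hd this
  exact dist_eq_zero.mp this

theorem mem_Tset_succ (hA : ∀ k : ℕ, ∀ x : X (k + 2), f k '' H (k + 1) x ⊆ H k (f (k + 1) x))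
    (j : ℕ) (z : ↥(invLim X f)) {a : X (j + 1)}
    (ha : a ∈ ⋂ k, Sset f H (j + 1) k z) : f j a ∈ ⋂ k, Sset f H j k z := by
  rw [Set.mem_iInter]
  intro k
  have hle : j + 1 ≤ max k (j + 1) := le_max_right _ _
  have hle' : j ≤ max k (j + 1) := by omega
  have hk' : f j a ∈ Sset f H j (max k (j + 1)) z := by
    have hak : a ∈ Sset f H (j + 1) (max k (j + 1)) z := Set.mem_iInter.mp ha _
    rw [Sset_of_le hle z] at hak
    obtain ⟨b, hb, rfl⟩ := hak
    rw [Sset_of_le hle' z]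
    exact ⟨b, hb, bondMap_bot f hle b⟩
  exact Sset_antitone hA j z (le_max_left k (j + 1)) hk'

end Sset

theorem reverse_dir {X : ℕ → Type*} [∀ n, MetricSpace (X n)] [∀ n, CompactSpace (X n)]
    (f : ∀ n, X (n + 1) → X n) (hfc : ∀ n, Continuous (f n))
    (H : ∀ k : ℕ, X (k + 1) → Set (X k))
    (hH : ∀ k, IsUSC (H k))
    (hA : ∀ k : ℕ, ∀ x : X (k + 2), f k '' H (k + 1) x ⊆ H k (f (k + 1) x))
    (hB : ∀ j : ℕ, ∀ z : ↥(invLim X f),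
      Tendsto (fun k => diam (if hj : j ≤ k then bondMap f hj '' H k (z.1 (k + 1))
        else (∅ : Set (X j)))) atTop (nhds (0 : ℝ)))
    (k₀ : ℕ) (hC : ∀ x : X (k₀ + 1), f k₀ x ∉ H k₀ x) :
    ¬ HasFPP ↥(invLim X f) := by
  intro hfpp
  haveI : CompactSpace ↥(invLim X f) :=
    isCompact_iff_compactSpace.mp (isClosed_invLim hfc).isCompact
  have hTne := Tset_nonempty (f := f) (H := H) hfc hH hA
  choose y hy using hTne
  have hthread : ∀ z : ↥(invLim X f), (fun j => y j z) ∈ invLim X f := by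
    intro z j
    show y j z = f j (y (j + 1) z)
    exact Tset_subsingleton hfc hH hB j z (hy j z) (mem_Tset_succ hA j z (hy (j + 1) z))
  set g : ↥(invLim X f) → ↥(invLim X f) := fun z => ⟨fun j => y j z, hthread z⟩ with hg
  -- closed graph
  have hgraph : IsClosed {p : ↥(invLim X f) × ↥(invLim X f) | p.2 = g p.1} := by
    have hEq : {p : ↥(invLim X f) × ↥(invLim X f) | p.2 = g p.1} =
        ⋂ (j : ℕ) (k : ℕ), {p : ↥(invLim X f) × ↥(invLim X f) | p.2.1 j ∈ Sset f H j k p.1} := by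
      ext p
      simp only [Set.mem_setOf_eq, Set.mem_iInter]
      constructor
      · intro hp j k
        rw [hp]
        exact Set.mem_iInter.mp (hy j p.1) k
      · intro hp
        have : ∀ j, p.2.1 j = y j p.1 := fun j =>
          Tset_subsingleton hfc hH hB j p.1 (Set.mem_iInter.mpr (hp j)) (hy j p.1)
        exact Subtype.ext (funext this)
    rw [hEq]
    refine isClosed_iInter fun j => isClosed_iInter fun k => ?_
    by_cases h : j ≤ k
    · have hG : IsClosed {q : X (k + 1) × X j | q.2 ∈ bondMap f h '' H k q.1} := by
        have : {q : X (k + 1) × X j | q.2 ∈ bondMap f h '' H k q.1} =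
            (fun q : X (k + 1) × X k => (q.1, bondMap f h q.2)) ''
              {q : X (k + 1) × X k | q.2 ∈ H k q.1} := by
          ext ⟨x, b⟩
          simp only [Set.mem_setOf_eq, Set.mem_image, Prod.mk.injEq, Prod.exists]
          constructor
          · rintro ⟨c, hc, rfl⟩
            exact ⟨x, c, hc, rfl, rfl⟩
          · rintro ⟨x', c, hc, rfl, rfl⟩
            exact ⟨c, hc, rfl⟩
        rw [this]
        exact (((hH k).2.2.isCompact).image
          (continuous_fst.prodMk ((bondMap_continuous hfc h).comp continuous_snd))).isClosed
      have : {p : ↥(invLim X f) × ↥(invLim X f) | p.2.1 j ∈ Sset f H j k p.1} =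
          (fun p : ↥(invLim X f) × ↥(invLim X f) => (p.1.1 (k + 1), p.2.1 j)) ⁻¹'
            {q : X (k + 1) × X j | q.2 ∈ bondMap f h '' H k q.1} := by
        ext p
        simp only [Set.mem_setOf_eq, Set.mem_preimage, Sset_of_le h]
      rw [this]
      exact hG.preimage ((((continuous_apply (k + 1)).comp continuous_subtype_val).comp
        continuous_fst).prodMk (((continuous_apply j).comp continuous_subtype_val).comp
          continuous_snd))
    · have : {p : ↥(invLim X f) × ↥(invLim X f) | p.2.1 j ∈ Sset f H j k p.1} = Set.univ := by
        ext p
        simp [Sset, dif_neg h]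
      rw [this]
      exact isClosed_univ
  have hgc : Continuous g := continuous_of_isClosed_graph hgraph
  obtain ⟨p, hp⟩ := hfpp g hgc
  -- derive contradiction at k₀
  have hyk : p.1 k₀ = y k₀ p := by
    have := congrArg Subtype.val hp
    exact (congrFun this k₀).symm
  have hmem : p.1 k₀ ∈ Sset f H k₀ k₀ p := hyk ▸ Set.mem_iInter.mp (hy k₀ p) k₀
  rw [Sset_of_le (le_refl k₀) p] at hmem
  obtain ⟨b, hb, hbe⟩ := hmem
  rw [bondMap_self f (le_refl k₀) b] at hbe
  subst hbe
  have hpk : p.1 k₀ = f k₀ (p.1 (k₀ + 1)) := p.2 k₀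
  rw [hpk] at hb
  exact hC (p.1 (k₀ + 1)) hb

theorem forward_dir {X : ℕ → Type*} [∀ n, MetricSpace (X n)] [∀ n, CompactSpace (X n)]
    (f : ∀ n, X (n + 1) → X n) (hfc : ∀ n, Continuous (f n)) (hfs : ∀ n, Surjective (f n))
    (g : ↥(invLim X f) → ↥(invLim X f)) (hg : Continuous g)
    (hnofix : ∀ p : ↥(invLim X f), g p ≠ p) :
    (∃ H : ∀ k : ℕ, X (k + 1) → Set (X k),
      (∀ k, IsUSC (H k)) ∧
      (∀ k : ℕ, ∀ x : X (k + 2), f k '' H (k + 1) x ⊆ H k (f (k + 1) x)) ∧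
      (∀ j : ℕ, ∀ z : ↥(invLim X f),
        Tendsto (fun k =>
            diam (if hj : j ≤ k then
              bondMap f hj '' H k (z.1 (k + 1))
            else (∅ : Set (X j))))
          atTop (nhds (0 : ℝ))) ∧
      (∃ k : ℕ, ∀ x : X (k + 1), f k x ∉ H k x)) := by
  haveI : CompactSpace ↥(invLim X f) :=
    isCompact_iff_compactSpace.mp (isClosed_invLim hfc).isCompact
  refine ⟨fun k => Ttrans g k (k + 1), ?_, ?_, ?_, ?_⟩
  · -- USC
    intro k
    have hΦ : Continuous (fun z : ↥(invLim X f) => (z.1 (k + 1), (g z).1 k)) :=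
      ((continuous_apply (k + 1)).comp continuous_subtype_val).prodMk
        ((continuous_apply k).comp (continuous_subtype_val.comp hg))
    have hgraph : IsClosed {p : X (k + 1) × X k | p.2 ∈ Ttrans g k (k + 1) p.1} := by
      have heq : {p : X (k + 1) × X k | p.2 ∈ Ttrans g k (k + 1) p.1} =
          Set.range (fun z : ↥(invLim X f) => (z.1 (k + 1), (g z).1 k)) := by
        ext ⟨a, b⟩
        simp only [Set.mem_setOf_eq, Ttrans, Set.mem_range, Prod.mk.injEq]
      rw [heq]
      exact (isCompact_range hΦ).isClosed
    refine ⟨?_, ?_, hgraph⟩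
    · intro a
      obtain ⟨z, hz, hz2⟩ := exists_thread hfc hfs (k + 1) a
      exact ⟨(g ⟨z, hz⟩).1 k, ⟨z, hz⟩, hz2, rfl⟩
    · intro a
      show IsClosed (Ttrans (f := f) (gs := f) g k (k + 1) a)
      have heq : Ttrans (f := f) (gs := f) g k (k + 1) a =
          (fun y => ((a, y) : X (k + 1) × X k)) ⁻¹'
            {p : X (k + 1) × X k | p.2 ∈ Ttrans g k (k + 1) p.1} := rfl
      rw [heq]
      exact hgraph.preimage (continuous_const.prodMk continuous_id)
  · -- compatibility
    rintro k x v ⟨b, ⟨w, hw1, rfl⟩, rfl⟩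
    refine ⟨w, ?_, (g w).2 k⟩
    have hwk : w.1 (k + 1) = f (k + 1) (w.1 (k + 2)) := w.2 (k + 1)
    rw [hwk, hw1]
  · -- diameters tend to zero
    intro j z
    have hφ : Continuous (fun w : ↥(invLim X f) => (g w).1 j) :=
      (continuous_apply j).comp (continuous_subtype_val.comp hg)
    set A : ℕ → Set ↥(invLim X f) := fun k => {w | w.1 (k + 1) = z.1 (k + 1)} with hA'
    have hAcl : ∀ k, IsClosed (A k) := fun k =>
      isClosed_eq ((continuous_apply (k + 1)).comp continuous_subtype_val) continuous_const
    have hAanti : Antitone A := by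
      apply antitone_nat_of_succ_le
      intro k w hw
      show w.1 (k + 1) = z.1 (k + 1)
      have h1 : w.1 (k + 1) = f (k + 1) (w.1 (k + 2)) := w.2 (k + 1)
      have h2 : z.1 (k + 1) = f (k + 1) (z.1 (k + 2)) := z.2 (k + 1)
      have h3 : w.1 (k + 2) = z.1 (k + 2) := hw
      rw [h1, h2, h3]
    have hIA : ∀ w, w ∈ (⋂ k, A k) → w = z := by
      intro w hw
      apply Subtype.ext; funext n
      cases n with
      | zero =>
        have h1 : w.1 0 = f 0 (w.1 1) := w.2 0
        have h2 : z.1 0 = f 0 (z.1 1) := z.2 0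
        have h3 : w.1 1 = z.1 1 := Set.mem_iInter.mp hw 0
        rw [h1, h2, h3]
      | succ n => exact Set.mem_iInter.mp hw n
    rw [Metric.tendsto_atTop]
    intro ε hε
    set U : Set ↥(invLim X f) := (fun w => (g w).1 j) ⁻¹' Metric.ball ((g z).1 j) (ε / 4)
      with hU'
    have hUopen : IsOpen U := Metric.isOpen_ball.preimage hφ
    have hzU : z ∈ U := by
      show (g z).1 j ∈ Metric.ball ((g z).1 j) (ε / 4)
      rw [Metric.mem_ball, dist_self]
      positivity
    obtain ⟨K, hK⟩ := exists_subset_nhds_of_isCompact' hAanti.directed_ge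
      (fun k => (hAcl k).isCompact) hAcl
      (fun w hw => hUopen.mem_nhds (by rw [hIA w hw]; exact hzU))
    refine ⟨max K j, fun k hk => ?_⟩
    have hjk : j ≤ k := le_trans (le_max_right K j) hk
    have hKk : K ≤ k := le_trans (le_max_left K j) hk
    have hsub : (fun w : ↥(invLim X f) => (g w).1 j) '' A k ⊆
        Metric.ball ((g z).1 j) (ε / 4) := by
      rintro v ⟨w, hw, rfl⟩
      exact hK (hAanti hKk hw)
    have hset : (if hj : j ≤ k then bondMap f hj '' Ttrans g k (k + 1) (z.1 (k + 1))
        else (∅ : Set (X j))) = (fun w : ↥(invLim X f) => (g w).1 j) '' A k := by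
      rw [dif_pos hjk]
      ext v
      constructor
      · rintro ⟨b, ⟨w, hw1, rfl⟩, rfl⟩
        exact ⟨w, hw1, (bondMap_thread (g w).2 hjk).symm⟩
      · rintro ⟨w, hw, rfl⟩
        exact ⟨(g w).1 k, ⟨w, hw, rfl⟩, bondMap_thread (g w).2 hjk⟩
    have hdiam : diam ((fun w : ↥(invLim X f) => (g w).1 j) '' A k) ≤ ε / 2 := by
      apply Metric.diam_le_of_forall_dist_le (by positivity)
      intro a ha b hb
      have h1 := Metric.mem_ball.mp (hsub ha)
      have h2 := Metric.mem_ball.mp (hsub hb)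
      calc dist a b ≤ dist a ((g z).1 j) + dist ((g z).1 j) b := dist_triangle _ _ _
        _ ≤ ε / 4 + ε / 4 := add_le_add h1.le (by rw [dist_comm]; exact h2.le)
        _ = ε / 2 := by ring
    rw [hset]
    rw [Real.dist_eq, sub_zero, abs_of_nonneg Metric.diam_nonneg]
    calc diam ((fun w : ↥(invLim X f) => (g w).1 j) '' A k) ≤ ε / 2 := hdiam
      _ < ε := by linarith
  · -- fixed-point-free coordinate
    have hCk : ∃ k, ∀ w : ↥(invLim X f), (g w).1 k ≠ w.1 k := by
      by_contra hcon
      push_neg at hcon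
      set C : ℕ → Set ↥(invLim X f) := fun k => {w | (g w).1 k = w.1 k} with hC'
      have hCcl : ∀ k, IsClosed (C k) := fun k => isClosed_eq
        ((continuous_apply k).comp (continuous_subtype_val.comp hg))
        ((continuous_apply k).comp continuous_subtype_val)
      have hCdec : ∀ k, C (k + 1) ⊆ C k := by
        intro k w hw
        show (g w).1 k = w.1 k
        have h1 : (g w).1 k = f k ((g w).1 (k + 1)) := (g w).2 k
        have h2 : w.1 k = f k (w.1 (k + 1)) := w.2 k
        have h3 : (g w).1 (k + 1) = w.1 (k + 1) := hw
        rw [h1, h2, h3]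
      obtain ⟨w, hw⟩ := IsCompact.nonempty_iInter_of_sequence_nonempty_isCompact_isClosed
        C hCdec (fun k => hcon k) (hCcl 0).isCompact hCcl
      exact hnofix w (Subtype.ext (funext fun n => Set.mem_iInter.mp hw n))
    obtain ⟨k, hk⟩ := hCk
    refine ⟨k, fun x hx => ?_⟩
    obtain ⟨w, hw1, hw2⟩ := hx
    apply hk w
    rw [hw2]
    have hwk : w.1 k = f k (w.1 (k + 1)) := w.2 k
    rw [hwk, hw1]

theorem stmt14
    {X : ℕ → Type*} [∀ n, MetricSpace (X n)] [∀ n, CompactSpace (X n)]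
    (f : ∀ n, X (n + 1) → X n)
    (hfc : ∀ n, Continuous (f n)) (hfs : ∀ n, Surjective (f n)) :
    (¬ HasFPP ↥(invLim X f)) ↔
    (∃ H : ∀ k : ℕ, X (k + 1) → Set (X k),
      (∀ k, IsUSC (H k)) ∧
      (∀ k : ℕ, ∀ x : X (k + 2), f k '' H (k + 1) x ⊆ H k (f (k + 1) x)) ∧
      (∀ j : ℕ, ∀ z : ↥(invLim X f),
        Tendsto (fun k =>
            diam (if hj : j ≤ k then
              bondMap f hj '' H k (z.1 (k + 1))
            else (∅ : Set (X j))))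
          atTop (nhds (0 : ℝ))) ∧
      (∃ k : ℕ, ∀ x : X (k + 1), f k x ∉ H k x)) := by
  constructor
  · intro hnf
    rw [HasFPP] at hnf
    push_neg at hnf
    obtain ⟨g, hg, hfix⟩ := hnf
    exact forward_dir f hfc hfs g hg hfix
  · rintro ⟨H, h1, h2, h3, k₀, h4⟩
    intro hfpp
    exact reverse_dir f hfc H h1 h2 h3 k₀ h4 hfpp
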